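/- Let 𝒞 be a category with finite limits. Let v : s ⟶ j and u : a ⟶ i be morphisms of 𝒞, and let i ⟵p— z —q⟶ j be a span in 𝒞. Then there is a bijection between the set of morphisms in the slice category 𝒞/j from v to q_*(p^*(u)) and the set of pairs consisting of a morphism f : s ⟶ a together with a morphism in the slice category 𝒞/(i × j) from ⟨f ≫ u, v⟩ : s ⟶ i × j to ⟨p, q⟩ : z ⟶ i × j. That is, 𝒞/j(v, q_* p^* u) ≅ Σ_{f ∈ 𝒞(s,a)} 𝒞/(i × j)(⟨f ≫ u, v⟩, ⟨p, q⟩). -/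

import Mathlib

open CategoryTheory CategoryTheory.Limits

lemma over_hom_heq {C : Type u} [Category.{v} C] {T : C} {A B X : Over T}
    (h : A = B) (k : A ⟶ X) (m : B ⟶ X) (hl : HEq k.left m.left) : HEq k m := by
  subst h
  rw [heq_eq_eq] at hl ⊢
  ext
  exact hl

/-- **Lemma (dependent lens hom decomposition).**
For a finitely complete category `𝒞`, morphisms `v : s ⟶ j`, `u : a ⟶ i` and a span
`i ⟵p— z —q⟶ j`, there is a bijection
`𝒞/j(v, q_* p^* u) ≅ Σ_{f ∈ 𝒞(s,a)} 𝒞/(i × j)(⟨f ≫ u, v⟩, ⟨p, q⟩)`. -/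
theorem dependent_lens_hom_equiv {C : Type u} [Category.{v} C] [HasFiniteLimits C]
    {s j a i z : C} (v : s ⟶ j) (u : a ⟶ i) (p : z ⟶ i) (q : z ⟶ j) :
    Nonempty
      ((Over.mk v ⟶ (Over.map q).obj ((Over.pullback p).obj (Over.mk u))) ≃
        (Σ f : s ⟶ a,
          (Over.mk (prod.lift (f ≫ u) v) ⟶ Over.mk (prod.lift p q)))) := by
  constructor
  refine
    { toFun := fun k =>
        ⟨k.left ≫ pullback.fst u p, Over.homMk (k.left ≫ pullback.snd u p) ?_⟩
      invFun := fun gp => Over.homMk (pullback.lift gp.1 gp.2.left ?_) ?_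
      left_inv := ?_
      right_inv := ?_ }
  · have hw := Over.w k
    dsimp at hw ⊢
    ext
    · erw [prod.lift_fst]; simp only [Category.assoc]; erw [prod.lift_fst]; simp [pullback.condition]
    · erw [prod.lift_snd]; simp only [Category.assoc]; erw [prod.lift_snd]; simpa using hw
  · have hw := Over.w gp.2
    dsimp at hw
    have := hw =≫ prod.fst
    erw [prod.lift_fst] at this; simp only [Category.assoc] at this; erw [prod.lift_fst] at this
    exact this.symm
  · have hw := Over.w gp.2
    dsimp at hw ⊢
    have := hw =≫ prod.snd
    erw [prod.lift_snd] at this; simp only [Category.assoc] at this; erw [prod.lift_snd] at this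
    erw [pullback.lift_snd_assoc]
    simpa using this
  · intro k
    ext
    dsimp
    ext
    · exact pullback.lift_fst _ _ _
    · exact pullback.lift_snd _ _ _
  · rintro ⟨f, g⟩
    have hf : pullback.lift f g.left
        (by have := Over.w g =≫ prod.fst; dsimp at this; erw [prod.lift_fst] at this; simp only [Category.assoc] at this; erw [prod.lift_fst] at this; exact this.symm) ≫
        pullback.fst u p = f := pullback.lift_fst _ _ _
    dsimp
    refine Sigma.ext hf
      (over_hom_heq (congrArg (fun t => Over.mk (prod.lift (t ≫ u) v)) hf) _ _ ?_)
    exact heq_of_eq (by dsimp; exact pullback.lift_snd _ _ _)
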